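/- Let μ_S be Lebesgue measure on ℝ restricted to (−1, 0) and μ_T be Lebesgue measure on ℝ restricted to (1, 2). Define g : ℝ → ℝ by g(x) = x + 1 if x ≤ 0 and g(x) = x − 1 if x > 0; define f_S : ℝ → {0,1} by f_S(x) = 0 if x ≤ −1/2 and f_S(x) = 1 if x > −1/2; define f_T : ℝ → {0,1} by f_T(x) = 0 if x ≥ 3/2 and f_T(x) = 1 if x < 3/2. Then for every measurable function h : ℝ → {0,1}: E_{x∼μ_S}[|h(g(x)) − f_S(x)|] + E_{x∼μ_T}[|h(g(x)) − f_T(x)|] = 1. -/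

import Mathlib

open MeasureTheory Set

/-- The piecewise-linear transformation `g(x) = x + 1` for `x ≤ 0` and
`g(x) = x − 1` for `x > 0`. -/
noncomputable def gEx : ℝ → ℝ := fun x => if x ≤ 0 then x + 1 else x - 1

/-- The source labeling function: `f_S(x) = 0` if `x ≤ −1/2`, `f_S(x) = 1` if `x > −1/2`. -/
noncomputable def fSEx : ℝ → ℝ := fun x => if x ≤ -(1 / 2 : ℝ) then 0 else 1

/-- The target labeling function: `f_T(x) = 0` if `x ≥ 3/2`, `f_T(x) = 1` if `x < 3/2`. -/
noncomputable def fTEx : ℝ → ℝ := fun x => if (3 / 2 : ℝ) ≤ x then 0 else 1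

theorem stmt_14 (h : ℝ → ℝ) (hmeas : Measurable h) (hrange : ∀ z, h z = 0 ∨ h z = 1) :
    (∫ x, |h (gEx x) - fSEx x| ∂(volume.restrict (Ioo (-1 : ℝ) 0))) +
      (∫ x, |h (gEx x) - fTEx x| ∂(volume.restrict (Ioo (1 : ℝ) 2))) = 1 := by
  set G1 : ℝ → ℝ := fun y => |h y - (if y ≤ (1/2 : ℝ) then 0 else 1)| with hG1
  set G2 : ℝ → ℝ := fun y => |h y - (if (1/2 : ℝ) ≤ y then 0 else 1)| with hG2
  have hG1m : Measurable G1 := by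
    apply Measurable.abs
    exact hmeas.sub (Measurable.ite (measurableSet_le measurable_id measurable_const)
      measurable_const measurable_const)
  have hG2m : Measurable G2 := by
    apply Measurable.abs
    exact hmeas.sub (Measurable.ite (measurableSet_le measurable_const measurable_id)
      measurable_const measurable_const)
  have habs : ∀ (z c : ℝ), (z = 0 ∨ z = 1) → (c = 0 ∨ c = 1) → |z - c| ≤ 1 := by
    rintro z c (rfl | rfl) (rfl | rfl) <;> norm_num
  have hbound1 : ∀ y, ‖G1 y‖ ≤ 1 := by
    intro y
    simp only [hG1, Real.norm_eq_abs, abs_abs]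
    exact habs _ _ (hrange y) (by split <;> simp)
  have hbound2 : ∀ y, ‖G2 y‖ ≤ 1 := by
    intro y
    simp only [hG2, Real.norm_eq_abs, abs_abs]
    exact habs _ _ (hrange y) (by split <;> simp)
  have hμ : IsFiniteMeasure (volume.restrict (Ioo (0:ℝ) 1)) := by
    constructor; simp [Real.volume_Ioo]
  have hint1 : Integrable G1 (volume.restrict (Ioo (0:ℝ) 1)) :=
    (integrable_const (1:ℝ)).mono' hG1m.aestronglyMeasurable
      (Filter.Eventually.of_forall hbound1)
  have hint2 : Integrable G2 (volume.restrict (Ioo (0:ℝ) 1)) :=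
    (integrable_const (1:ℝ)).mono' hG2m.aestronglyMeasurable
      (Filter.Eventually.of_forall hbound2)
  -- source integral
  have hmap1 : Measure.map (fun x : ℝ => x + 1) (volume.restrict (Ioo (-1 : ℝ) 0)) =
      volume.restrict (Ioo (0:ℝ) 1) := by
    have hpre : Ioo (-1 : ℝ) 0 = (fun x : ℝ => x + 1) ⁻¹' (Ioo (0:ℝ) 1) := by
      ext x; simp only [mem_preimage, mem_Ioo]; constructor <;> rintro ⟨a, b⟩ <;>
        constructor <;> linarith
    rw [hpre, ← Measure.restrict_map (measurable_add_const 1) measurableSet_Ioo,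
      map_add_right_eq_self volume 1]
  have hmap2 : Measure.map (fun x : ℝ => x - 1) (volume.restrict (Ioo (1 : ℝ) 2)) =
      volume.restrict (Ioo (0:ℝ) 1) := by
    have hpre : Ioo (1 : ℝ) 2 = (fun x : ℝ => x - 1) ⁻¹' (Ioo (0:ℝ) 1) := by
      ext x; simp only [mem_preimage, mem_Ioo]; constructor <;> rintro ⟨a, b⟩ <;>
        constructor <;> linarith
    have : Measure.map (fun x : ℝ => x - 1) volume = volume := by
      simpa [sub_eq_add_neg] using map_add_right_eq_self volume (-1 : ℝ)
    rw [hpre, ← Measure.restrict_map (measurable_sub_const 1) measurableSet_Ioo, this]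
  have hS : (∫ x, |h (gEx x) - fSEx x| ∂(volume.restrict (Ioo (-1 : ℝ) 0))) =
      ∫ y, G1 y ∂(volume.restrict (Ioo (0:ℝ) 1)) := by
    rw [← hmap1, integral_map (measurable_add_const 1).aemeasurable
      (hG1m.aestronglyMeasurable)]
    apply setIntegral_congr_fun measurableSet_Ioo
    intro x hx
    obtain ⟨hx1, hx2⟩ := hx
    simp only [hG1, gEx, fSEx]
    rw [if_pos hx2.le]
    have : (if x ≤ -(1/2:ℝ) then (0:ℝ) else 1) = (if x + 1 ≤ (1/2:ℝ) then (0:ℝ) else 1) := by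
      split_ifs with h1 h2 h2 <;> first | rfl | exfalso <;> linarith
    rw [this]
  have hT : (∫ x, |h (gEx x) - fTEx x| ∂(volume.restrict (Ioo (1 : ℝ) 2))) =
      ∫ y, G2 y ∂(volume.restrict (Ioo (0:ℝ) 1)) := by
    rw [← hmap2, integral_map (measurable_sub_const 1).aemeasurable
      (hG2m.aestronglyMeasurable)]
    apply setIntegral_congr_fun measurableSet_Ioo
    intro x hx
    obtain ⟨hx1, hx2⟩ := hx
    simp only [hG2, gEx, fTEx]
    rw [if_neg (by linarith)]
    have : (if (3/2:ℝ) ≤ x then (0:ℝ) else 1) = (if (1/2:ℝ) ≤ x - 1 then (0:ℝ) else 1) := by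
      split_ifs with h1 h2 h2 <;> first | rfl | exfalso <;> linarith
    rw [this]
  rw [hS, hT, ← integral_add hint1 hint2]
  have hae : ∀ᵐ y ∂(volume.restrict (Ioo (0:ℝ) 1)), G1 y + G2 y = 1 := by
    have hnull : (volume.restrict (Ioo (0:ℝ) 1)) {(1/2 : ℝ)} = 0 := by
      refine le_antisymm ?_ zero_le
      calc (volume.restrict (Ioo (0:ℝ) 1)) {(1/2 : ℝ)} ≤ volume {(1/2 : ℝ)} :=
        Measure.restrict_le_self _
      _ = 0 := Real.volume_singleton
    refine Filter.eventuallyEq_of_mem (compl_mem_ae_iff.mpr hnull) ?_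
    intro y hy
    have hy' : y ≠ (1/2 : ℝ) := by simpa using hy
    simp only [hG1, hG2]
    rcases lt_or_gt_of_ne hy' with hlt | hgt
    · rw [if_pos hlt.le, if_neg (not_le.mpr hlt)]
      rcases hrange y with h0 | h0 <;> rw [h0] <;> norm_num
    · rw [if_neg (not_le.mpr hgt), if_pos hgt.le]
      rcases hrange y with h0 | h0 <;> rw [h0] <;> norm_num
  rw [integral_congr_ae hae]
  simp [Real.volume_Ioo]
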